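/- Let A be a unital C*-algebra with an algebra F of finite type elements. For every projection p ∈ F there exists an approximate unit (p_α) of F consisting of projections with p ≤ p_α for all α. -/

import Mathlib

/-- A projection in a C*-algebra: a self-adjoint idempotent. -/
def IsProjection {A : Type*} [Ring A] [StarRing A] (p : A) : Prop :=
  star p = p ∧ p * p = p

/-- Murray–von Neumann equivalence: `p ∼ q` iff there is `v` with `v v* = p`
and `v* v = q`. -/
def MvNEquiv {A : Type*} [Ring A] [StarRing A] (p q : A) : Prop :=
  ∃ v : A, v * star v = p ∧ star v * v = q

/-- `(u α)_{α}` (indexed by the directed set `(ι, rel)`) is an approximate unit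
for `F` consisting of projections. -/
structure IsApproxUnit {A : Type*} [NormedRing A] [StarRing A] (F : Set A)
    {ι : Type} (rel : ι → ι → Prop) (u : ι → A) : Prop where
  nonempty : Nonempty ι
  directed : ∀ α β : ι, ∃ γ : ι, rel α γ ∧ rel β γ
  proj : ∀ α, IsProjection (u α)
  mem : ∀ α, u α ∈ F
  approx : ∀ f ∈ F, ∀ ε : ℝ, 0 < ε → ∃ α, ∀ β, rel α β → ‖f - u β * f‖ < ε

/-- `F` is an algebra of finite type elements: a self-adjoint two-sided ideal
with an approximate unit consisting of projections, satisfying the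
orthogonalization property (iii). -/
structure IsFiniteType {A : Type*} [NormedRing A] [StarRing A] (F : Set A) : Prop where
  zero_mem : (0 : A) ∈ F
  add_mem : ∀ a ∈ F, ∀ b ∈ F, a + b ∈ F
  mul_mem_left : ∀ (a : A), ∀ b ∈ F, a * b ∈ F
  mul_mem_right : ∀ (a : A), ∀ b ∈ F, b * a ∈ F
  star_mem : ∀ a ∈ F, star a ∈ F
  approx_unit : ∃ (ι : Type) (rel : ι → ι → Prop) (u : ι → A), IsApproxUnit F rel u
  orth : ∀ p ∈ F, ∀ q ∈ F, IsProjection p → IsProjection q →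
    ∃ v : A, v * star v = q ∧ IsProjection (star v * v + p)

/-- `b` is a `(p,q)`-inverse of `a`. -/
def IsPQInv {A : Type*} [Ring A] (a p q b : A) : Prop :=
  b = (1 - p) * b * (1 - q) ∧ (1 - q) * a * (1 - p) * b = 1 - q ∧
    b * ((1 - q) * a * (1 - p)) = 1 - p

/-- `a` is invertible up to `(p,q)`. -/
def InvUpTo {A : Type*} [Ring A] (a p q : A) : Prop := ∃ b, IsPQInv a p q b
section AuxLemmas

variable {A : Type*} [NormedRing A] [StarRing A] [CStarRing A] [CompleteSpace A]
  [NormedAlgebra ℂ A] [StarModule ℂ A]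

lemma IsProjection.norm_le_one {x : A} (hx : IsProjection x) : ‖x‖ ≤ 1 := by
  have h : ‖x‖ * ‖x‖ = ‖x‖ := by
    rw [← CStarRing.norm_star_mul_self (x := x), hx.1, hx.2]
  nlinarith [norm_nonneg x]

lemma IsProjection.one_sub' {x : A} (hx : IsProjection x) : IsProjection (1 - x) := by
  obtain ⟨h1, h2⟩ := hx
  refine ⟨by simp [star_sub, h1], ?_⟩
  simp only [mul_sub, sub_mul, mul_one, one_mul, h2]
  abel

lemma key_construction [Nontrivial A] {p a : A}
    (hp : IsProjection p) (ha : IsProjection a) (hd : ‖p - a * p‖ < 1 / 8) :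
    ∃ q : A, IsProjection q ∧ p * q = p ∧ (∃ x w : A, q = a * x + w * (a * x)) ∧
      ∀ f : A, ‖f - q * f‖ ≤ ‖f - a * f‖ + 2 * ‖p - a * p‖ * ‖f‖ := by
  obtain ⟨hps, hpi⟩ := hp
  obtain ⟨has, hai⟩ := ha
  have hpn : ‖p‖ ≤ 1 := IsProjection.norm_le_one ⟨hps, hpi⟩
  have han : ‖a‖ ≤ 1 := IsProjection.norm_le_one ⟨has, hai⟩
  set y : A := p - a * p with hy
  have hyn : ‖y‖ < 1 / 8 := hd
  have hyn0 : (0 : ℝ) ≤ ‖y‖ := norm_nonneg y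
  clear_value y
  set c : A := p * a * p + (1 - p) with hc
  clear_value c
  have h1c : 1 - c = p * y := by
    rw [hy, mul_sub, ← mul_assoc, hpi, hc]; noncomm_ring
  have hcn : ‖1 - c‖ < 1 / 8 := by
    rw [h1c]
    calc ‖p * y‖ ≤ ‖p‖ * ‖y‖ := norm_mul_le _ _
      _ ≤ 1 * ‖y‖ := mul_le_mul_of_nonneg_right hpn hyn0
      _ < 1 / 8 := by rw [one_mul]; exact hyn
  have hcu : IsUnit c := by
    have := isUnit_one_sub_of_norm_lt_one (x := 1 - c) (by linarith)
    rwa [sub_sub_cancel] at this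
  obtain ⟨w, hw⟩ := hcu
  set ci : A := ↑w⁻¹ with hciv
  clear_value ci
  have hci1 : c * ci = 1 := by rw [← hw, hciv]; exact w.mul_inv
  have hci2 : ci * c = 1 := by rw [← hw, hciv]; exact w.inv_mul
  have hcin : ‖ci‖ ≤ 2 := by
    have e : ci = 1 + ci * (1 - c) := by rw [mul_sub, mul_one, hci2]; noncomm_ring
    have hb : ‖ci‖ ≤ 1 + ‖ci‖ * ‖1 - c‖ := by
      calc ‖ci‖ = ‖1 + ci * (1 - c)‖ := by rw [← e]
        _ ≤ ‖(1 : A)‖ + ‖ci * (1 - c)‖ := norm_add_le _ _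
        _ ≤ 1 + ‖ci‖ * ‖1 - c‖ := by
            rw [norm_one]
            exact add_le_add (le_refl _) (norm_mul_le _ _)
    nlinarith [norm_nonneg ci, mul_le_mul_of_nonneg_left hcn.le (norm_nonneg ci)]
  set z : A := ci * (p * a) with hz
  clear_value z
  have hzn : ‖z‖ ≤ 2 := by
    have h1 : ‖p * a‖ ≤ 1 := by
      calc ‖p * a‖ ≤ ‖p‖ * ‖a‖ := norm_mul_le _ _
        _ ≤ 1 := by nlinarith [norm_nonneg a]
    calc ‖z‖ = ‖ci * (p * a)‖ := by rw [hz]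
      _ ≤ ‖ci‖ * ‖p * a‖ := norm_mul_le _ _
      _ ≤ 2 * 1 := mul_le_mul hcin h1 (norm_nonneg _) (by norm_num)
      _ = 2 := by norm_num
  have hcp : c * p = p * (a * p) := by
    rw [hc]
    simp only [add_mul, sub_mul, one_mul, mul_assoc, hpi, sub_self, add_zero]
  have hzp : z * p = p := by
    calc z * p = ci * (c * p) := by rw [hz, mul_assoc, mul_assoc, hcp]
      _ = (ci * c) * p := by rw [mul_assoc]
      _ = p := by rw [hci2, one_mul]
  have hza : z * a = z := by
    rw [hz]; simp only [mul_assoc, hai]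
  have hay : a * y = 0 := by rw [hy, mul_sub, ← mul_assoc, hai, sub_self]
  have hzy : z * y = 0 := by
    have h1 : z * (a * p) = p := by rw [← mul_assoc, hza, hzp]
    rw [hy, mul_sub, hzp, h1, sub_self]
  have hyp : y * p = y := by
    rw [hy]; simp only [sub_mul, mul_assoc, hpi]
  set m : A := a + y * z with hm
  clear_value m
  have hmp : m * p = p := by
    calc m * p = a * p + y * (z * p) := by rw [hm, add_mul, mul_assoc]
      _ = p := by rw [hzp, hyp, hy]; abel
  have hay' : ∀ x : A, a * (y * x) = 0 := fun x => by rw [← mul_assoc, hay, zero_mul]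
  have hzy' : ∀ x : A, z * (y * x) = 0 := fun x => by rw [← mul_assoc, hzy, zero_mul]
  have hmm : m * m = m := by
    rw [hm]
    simp only [add_mul, mul_add, mul_assoc, hai, hay', hza, hzy', mul_zero, add_zero, zero_add]
  set t : A := star m with ht
  clear_value t
  have hstm : star m = t := ht.symm
  have hst : star t = m := by rw [ht, star_star]
  have htt : t * t = t := by rw [ht, ← star_mul, hmm]
  set N : A := 1 + m * t + t * m - m - t with hN
  clear_value N
  have hNs : star N = N := by
    rw [hN]
    simp only [star_sub, star_add, star_mul, star_one, hstm, hst]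
    abel
  have hmm' : ∀ x : A, x * m * m = x * m := fun x => by rw [mul_assoc, hmm]
  have htt' : ∀ x : A, x * t * t = x * t := fun x => by rw [mul_assoc, htt]
  have hmtm : m * N = (m * t) * m := by
    rw [hN]
    simp only [mul_add, mul_sub, mul_one, ← mul_assoc, hmm]
    abel
  have hNm : N * m = (m * t) * m := by
    rw [hN]
    simp only [add_mul, sub_mul, one_mul, hmm, hmm']
    abel
  have htN : t * N = (t * m) * t := by
    rw [hN]
    simp only [mul_add, mul_sub, mul_one, ← mul_assoc, htt]
    abel
  have hNt : N * t = (t * m) * t := by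
    rw [hN]
    simp only [add_mul, sub_mul, one_mul, htt, htt']
    abel
  have hmNc : m * N = N * m := hmtm.trans hNm.symm
  have htNc : t * N = N * t := htN.trans hNt.symm
  have hman : ‖m - a‖ ≤ 2 * ‖y‖ := by
    have e : m - a = y * z := by rw [hm]; abel
    rw [e]
    calc ‖y * z‖ ≤ ‖y‖ * ‖z‖ := norm_mul_le _ _
      _ ≤ ‖y‖ * 2 := mul_le_mul_of_nonneg_left hzn hyn0
      _ = 2 * ‖y‖ := by ring
  have hmtn : ‖m - t‖ ≤ 4 * ‖y‖ := by
    have e : m - t = (m - a) - star (m - a) := by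
      rw [star_sub, has, hstm]; abel
    rw [e]
    calc ‖(m - a) - star (m - a)‖ ≤ ‖m - a‖ + ‖star (m - a)‖ := norm_sub_le _ _
      _ = ‖m - a‖ + ‖m - a‖ := by rw [norm_star]
      _ ≤ 4 * ‖y‖ := by linarith
  have hNn : ‖1 - N‖ < 1 := by
    have e : 1 - N = (m - t) * (m - t) := by
      rw [hN]
      simp only [mul_sub, sub_mul, hmm, htt]
      abel
    rw [e]
    have h2 : ‖m - t‖ * ‖m - t‖ ≤ (4 * ‖y‖) * (4 * ‖y‖) :=
      mul_le_mul hmtn hmtn (norm_nonneg _) (by positivity)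
    calc ‖(m - t) * (m - t)‖ ≤ ‖m - t‖ * ‖m - t‖ := norm_mul_le _ _
      _ < 1 := by nlinarith [h2, hyn, hyn0]
  have hNu : IsUnit N := by
    have := isUnit_one_sub_of_norm_lt_one (x := 1 - N) hNn
    rwa [sub_sub_cancel] at this
  obtain ⟨v, hv⟩ := hNu
  set ni : A := ↑v⁻¹ with hniv
  clear_value ni
  have hni1 : N * ni = 1 := by rw [← hv, hniv]; exact v.mul_inv
  have hni2 : ni * N = 1 := by rw [← hv, hniv]; exact v.inv_mul
  have hnis : star ni = ni := by
    have h1 : star ni * N = 1 := by rw [← hNs, ← star_mul, hni1, star_one]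
    calc star ni = star ni * (N * ni) := by rw [hni1, mul_one]
      _ = (star ni * N) * ni := by rw [mul_assoc]
      _ = ni := by rw [h1, one_mul]
  have hnim : ni * m = m * ni := by
    calc ni * m = ni * m * (N * ni) := by rw [hni1, mul_one]
      _ = ni * (m * N) * ni := by simp only [mul_assoc]
      _ = ni * (N * m) * ni := by rw [hmNc]
      _ = (ni * N) * (m * ni) := by simp only [mul_assoc]
      _ = m * ni := by rw [hni2, one_mul]
  have hnit : ni * t = t * ni := by
    calc ni * t = ni * t * (N * ni) := by rw [hni1, mul_one]
      _ = ni * (t * N) * ni := by simp only [mul_assoc]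
      _ = ni * (N * t) * ni := by rw [htNc]
      _ = (ni * N) * (t * ni) := by simp only [mul_assoc]
      _ = t * ni := by rw [hni2, one_mul]
  have hnim' : ∀ x : A, ni * (m * x) = m * (ni * x) := fun x => by
    rw [← mul_assoc, hnim, mul_assoc]
  have hnit' : ∀ x : A, ni * (t * x) = t * (ni * x) := fun x => by
    rw [← mul_assoc, hnit, mul_assoc]
  set q : A := m * (t * ni) with hq
  clear_value q
  have hqm : q * m = m := by
    calc q * m = m * (t * (ni * m)) := by rw [hq]; simp only [mul_assoc]
      _ = m * (t * (m * ni)) := by rw [hnim]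
      _ = ((m * t) * m) * ni := by simp only [mul_assoc]
      _ = (m * N) * ni := by rw [hmtm]
      _ = m := by rw [mul_assoc, hni1, mul_one]
  have hqs : star q = q := by
    calc star q = (star ni * star t) * star m := by rw [hq, star_mul, star_mul]
      _ = (ni * m) * t := by rw [hnis, hst, hstm]
      _ = m * (ni * t) := by rw [hnim, mul_assoc]
      _ = q := by rw [hnit, hq]
  have hqq : q * q = q := by
    calc q * q = m * (t * (ni * (m * (t * ni)))) := by rw [hq]; simp only [mul_assoc]
      _ = m * (t * (m * (ni * (t * ni)))) := by rw [hnim']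
      _ = m * (t * (m * (t * (ni * ni)))) := by rw [hnit']
      _ = (((m * t) * m) * t) * (ni * ni) := by simp only [mul_assoc]
      _ = ((m * N) * t) * (ni * ni) := by rw [hmtm]
      _ = (m * (N * t)) * (ni * ni) := by rw [mul_assoc m N t]
      _ = (m * (t * N)) * (ni * ni) := by rw [htNc]
      _ = m * (t * ((N * ni) * ni)) := by simp only [mul_assoc]
      _ = m * (t * ni) := by rw [hni1, one_mul]
      _ = q := hq.symm
  have hqp : q * p = p := by
    calc q * p = q * (m * p) := by rw [hmp]
      _ = (q * m) * p := by rw [mul_assoc]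
      _ = p := by rw [hqm, hmp]
  have hpq : p * q = p := by
    have h1 := congrArg star hqp
    rwa [star_mul, hqs, hps] at h1
  refine ⟨q, ⟨hqs, hqq⟩, hpq, ⟨t * ni, (y * ci) * p, ?_⟩, ?_⟩
  · rw [hq, hm, add_mul, hz]
    simp only [mul_assoc]
  · intro f
    have h1q : ‖1 - q‖ ≤ 1 := (IsProjection.one_sub' ⟨hqs, hqq⟩).norm_le_one
    have e1 : f - q * f = (1 - q) * (f - a * f) + ((1 - q) * (a - m)) * f := by
      simp only [sub_mul, mul_sub, one_mul, ← mul_assoc, hqm]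
      abel
    have hamn : ‖a - m‖ ≤ 2 * ‖y‖ := by rw [norm_sub_rev]; exact hman
    calc ‖f - q * f‖ = ‖(1 - q) * (f - a * f) + ((1 - q) * (a - m)) * f‖ := by rw [e1]
      _ ≤ ‖(1 - q) * (f - a * f)‖ + ‖((1 - q) * (a - m)) * f‖ := norm_add_le _ _
      _ ≤ ‖1 - q‖ * ‖f - a * f‖ + (‖1 - q‖ * ‖a - m‖) * ‖f‖ := by
          refine add_le_add (norm_mul_le _ _) ?_
          exact le_trans (norm_mul_le _ _)
            (mul_le_mul_of_nonneg_right (norm_mul_le _ _) (norm_nonneg f))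
      _ ≤ ‖f - a * f‖ + 2 * ‖y‖ * ‖f‖ := by
          refine add_le_add ?_ ?_
          · calc ‖1 - q‖ * ‖f - a * f‖ ≤ 1 * ‖f - a * f‖ :=
                mul_le_mul_of_nonneg_right h1q (norm_nonneg _)
              _ = ‖f - a * f‖ := one_mul _
          · refine mul_le_mul_of_nonneg_right ?_ (norm_nonneg f)
            calc ‖1 - q‖ * ‖a - m‖ ≤ 1 * ‖a - m‖ :=
                mul_le_mul_of_nonneg_right h1q (norm_nonneg _)
              _ = ‖a - m‖ := one_mul _
              _ ≤ 2 * ‖y‖ := hamn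

end AuxLemmas

/-- For every projection `p ∈ F` there is an approximate unit `(u α)` of `F`
consisting of projections with `p ≤ u α` for all `α`. -/
theorem exists_approxUnit_dominating
    {A : Type*} [NormedRing A] [StarRing A] [CStarRing A] [CompleteSpace A]
    [NormedAlgebra ℂ A] [StarModule ℂ A]
    (F : Set A) (hF : IsFiniteType F)
    (p : A) (hpF : p ∈ F) (hp : IsProjection p) :
    ∃ (ι : Type) (rel : ι → ι → Prop) (u : ι → A),
      IsApproxUnit F rel u ∧ ∀ α, p * u α = p := by
  classical
  obtain ⟨ι, rel, u, hu⟩ := hF.approx_unit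
  rcases subsingleton_or_nontrivial A with hs | hn
  · refine ⟨ι, rel, fun _ => p, ⟨hu.nonempty, hu.directed, fun _ => hp, fun _ => hpF,
      fun f hf ε hε => ⟨Classical.choice hu.nonempty, fun β _ => by
        simpa [Subsingleton.elim (f - p * f) (0 : A)] using hε⟩⟩, fun _ => hp.2⟩
  · have hchoice : ∀ β : ι, ‖p - u β * p‖ < 1 / 8 →
        ∃ q : A, IsProjection q ∧ p * q = p ∧ (∃ x w : A, q = u β * x + w * (u β * x)) ∧
          ∀ f : A, ‖f - q * f‖ ≤ ‖f - u β * f‖ + 2 * ‖p - u β * p‖ * ‖f‖ :=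
      fun β h => key_construction hp (hu.proj β) h
    set u' : ι → A := fun β =>
      if h : ‖p - u β * p‖ < 1 / 8 then (hchoice β h).choose else p with hu'
    have hu'spec : ∀ β, IsProjection (u' β) ∧ u' β ∈ F ∧ p * u' β = p := by
      intro β
      by_cases h : ‖p - u β * p‖ < 1 / 8
      · obtain ⟨hq1, hq2, ⟨x, w0, hxw⟩, _⟩ := (hchoice β h).choose_spec
        have e : u' β = (hchoice β h).choose := by simp only [hu']; exact dif_pos h
        rw [e]
        refine ⟨hq1, ?_, hq2⟩
        rw [hxw]
        exact hF.add_mem _ (hF.mul_mem_right x _ (hu.mem β)) _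
          (hF.mul_mem_left w0 _ (hF.mul_mem_right x _ (hu.mem β)))
      · have e : u' β = p := by simp only [hu']; exact dif_neg h
        rw [e]; exact ⟨hp, hpF, hp.2⟩
    refine ⟨ι, rel, u', ⟨hu.nonempty, hu.directed, fun β => (hu'spec β).1,
      fun β => (hu'spec β).2.1, ?_⟩, fun β => (hu'spec β).2.2⟩
    intro f hf ε hε
    letI : CStarAlgebra A := ⟨⟩
    letI : PartialOrder A := CStarAlgebra.spectralOrder A
    letI : StarOrderedRing A := CStarAlgebra.spectralOrderedRing A
    set δ : ℝ := min (1 / 16) (ε / (4 * (‖f‖ + 1))) with hδ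
    have hδ0 : 0 < δ := lt_min (by norm_num) (by positivity)
    have hδ1 : δ ≤ 1 / 16 := min_le_left _ _
    have hδ2 : δ ≤ ε / (4 * (‖f‖ + 1)) := min_le_right _ _
    have hhF : f * star f + p ∈ F :=
      hF.add_mem _ (hF.mul_mem_right (star f) _ hf) _ hpF
    obtain ⟨α, hα⟩ := hu.approx _ hhF (δ * δ) (by positivity)
    refine ⟨α, fun β hβ => ?_⟩
    have hb : ‖(f * star f + p) - u β * (f * star f + p)‖ < δ * δ := hα β hβ
    have haP : IsProjection (u β) := hu.proj β
    have hp0 : (0 : A) ≤ p := by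
      have h0 := star_mul_self_nonneg p
      rwa [hp.1, hp.2] at h0
    have hsa : IsSelfAdjoint (1 - u β) := by
      rw [IsSelfAdjoint, star_sub, star_one, haP.1]
    have gen : ∀ g : A, g * star g ≤ f * star f + p → ‖g - u β * g‖ < δ := by
      intro g hg
      have e0 : g - u β * g = (1 - u β) * g := by rw [sub_mul, one_mul]
      have nsq : ‖(1 - u β) * g‖ * ‖(1 - u β) * g‖
          = ‖(1 - u β) * (g * star g) * (1 - u β)‖ := by
        rw [← CStarRing.norm_self_mul_star (x := (1 - u β) * g)]
        congr 1
        rw [star_mul, hsa.star_eq]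
        simp only [mul_assoc]
      have hpos : 0 ≤ (1 - u β) * (g * star g) * (1 - u β) :=
        IsSelfAdjoint.conjugate_nonneg (mul_star_self_nonneg g) hsa
      have hle : (1 - u β) * (g * star g) * (1 - u β)
          ≤ (1 - u β) * (f * star f + p) * (1 - u β) :=
        IsSelfAdjoint.conjugate_le_conjugate hg hsa
      have h1a : ‖(1 : A) - u β‖ ≤ 1 := (IsProjection.one_sub' haP).norm_le_one
      have hnorm1 : ‖(1 - u β) * (g * star g) * (1 - u β)‖
          ≤ ‖(1 - u β) * (f * star f + p) * (1 - u β)‖ :=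
        CStarAlgebra.norm_le_norm_of_nonneg_of_le hpos hle
      have hnorm2 : ‖(1 - u β) * (f * star f + p) * (1 - u β)‖ < δ * δ := by
        calc ‖(1 - u β) * (f * star f + p) * (1 - u β)‖
            ≤ ‖(1 - u β) * (f * star f + p)‖ * ‖1 - u β‖ := norm_mul_le _ _
          _ ≤ ‖(1 - u β) * (f * star f + p)‖ * 1 :=
              mul_le_mul_of_nonneg_left h1a (norm_nonneg _)
          _ = ‖(f * star f + p) - u β * (f * star f + p)‖ := by
              rw [mul_one, sub_mul, one_mul]
          _ < δ * δ := hb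
      have hxx : ‖(1 - u β) * g‖ * ‖(1 - u β) * g‖ < δ * δ := by
        rw [nsq]; exact lt_of_le_of_lt hnorm1 hnorm2
      rw [e0]
      nlinarith [norm_nonneg ((1 - u β) * g), hδ0]
    have hfsmall : ‖f - u β * f‖ < δ := gen f (le_add_of_nonneg_right hp0)
    have hpsmall : ‖p - u β * p‖ < δ := by
      refine gen p ?_
      rw [hp.1, hp.2]
      exact le_add_of_nonneg_left (mul_star_self_nonneg f)
    have h18 : ‖p - u β * p‖ < 1 / 8 := by linarith
    have e : u' β = (hchoice β h18).choose := by simp only [hu']; exact dif_pos h18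
    obtain ⟨hq1, hq2, _, hest⟩ := (hchoice β h18).choose_spec
    have hb2 := hest f
    rw [← e] at hb2
    have hmul : δ * (4 * (‖f‖ + 1)) ≤ ε := by
      rw [← le_div_iff₀ (by positivity)]; exact hδ2
    calc ‖f - u' β * f‖ ≤ ‖f - u β * f‖ + 2 * ‖p - u β * p‖ * ‖f‖ := hb2
      _ < δ + 2 * δ * ‖f‖ := by
          refine add_lt_add_of_lt_of_le hfsmall ?_
          have := mul_le_mul_of_nonneg_right hpsmall.le (norm_nonneg f)
          nlinarith [norm_nonneg f]
      _ < ε := by nlinarith [hδ0, norm_nonneg f, mul_nonneg hδ0.le (norm_nonneg f)]
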